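/- In Λ_{1,7} with k = -3e_0 + e_1 + ... + e_7, the Geiser involution x ↦ -x + (x·k)k maps the set of exceptional elements (those e with e·e = -1 and e·k = -1) to itself, and has no fixed exceptional element; thus the 56 exceptional elements are partitioned into 28 pairs. -/

import Mathlib

/-- The inner product of Λ_{1,7}. -/
def lambdaForm (x y : Fin 8 → ℤ) : ℤ := 2 * x 0 * y 0 - ∑ i, x i * y i

/-- k = -3e_0 + e_1 + ... + e_7 -/
def kvec : Fin 8 → ℤ := fun i => if i = 0 then -3 else 1

/-- The Geiser involution x ↦ -x + (x·k)k. -/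
def geiser (x : Fin 8 → ℤ) : Fin 8 → ℤ := -x + lambdaForm x kvec • kvec

/-- Exceptional elements of Λ_{1,7}. -/
def IsExceptional (e : Fin 8 → ℤ) : Prop :=
  lambdaForm e e = -1 ∧ lambdaForm e kvec = -1

instance : DecidablePred IsExceptional := fun e => by unfold IsExceptional; infer_instance

noncomputable def B0 : Finset (Fin 8 → ℤ) :=
  Fintype.piFinset fun i => if i = 0 then Finset.Icc 0 1 else Finset.Icc (-1) 1

noncomputable def E0 : Finset (Fin 8 → ℤ) := B0.filter IsExceptional

noncomputable def Efin : Finset (Fin 8 → ℤ) := E0 ∪ E0.image geiser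

noncomputable def Pfin : Finset (Finset (Fin 8 → ℤ)) := Efin.image fun e => {e, geiser e}


lemma kv0 : kvec 0 = -3 := rfl
lemma kv1 : kvec 1 = 1 := rfl
lemma kv2 : kvec 2 = 1 := rfl
lemma kv3 : kvec 3 = 1 := rfl
lemma kv4 : kvec 4 = 1 := rfl
lemma kv5 : kvec 5 = 1 := rfl
lemma kv6 : kvec 6 = 1 := rfl
lemma kv7 : kvec 7 = 1 := rfl

lemma geiser_eq {e : Fin 8 → ℤ} (h : lambdaForm e kvec = -1) : geiser e = -e - kvec := by
  funext i
  simp [geiser, h]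
  ring

lemma exceptional_geiser {e : Fin 8 → ℤ} (h : IsExceptional e) : IsExceptional (geiser e) := by
  obtain ⟨h1, h2⟩ := h
  rw [geiser_eq h2]
  simp only [IsExceptional, lambdaForm, Fin.sum_univ_eight, kv0, kv1, kv2, kv3, kv4, kv5, kv6, kv7,
    Pi.sub_apply, Pi.neg_apply] at h1 h2 ⊢
  constructor <;> linarith

lemma geiser_geiser {e : Fin 8 → ℤ} (h : IsExceptional e) : geiser (geiser e) = e := by
  have h2 := (exceptional_geiser h).2
  rw [geiser_eq h.2] at h2 ⊢
  rw [geiser_eq h2]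
  ring

set_option maxHeartbeats 2000000 in
lemma exc_expand {x : Fin 8 → ℤ} (h : IsExceptional x) :
    x 1 * x 1 + x 2 * x 2 + x 3 * x 3 + x 4 * x 4 + x 5 * x 5 + x 6 * x 6 + x 7 * x 7
      = x 0 * x 0 + 1 ∧
    x 1 + x 2 + x 3 + x 4 + x 5 + x 6 + x 7 = 1 - 3 * x 0 := by
  obtain ⟨h1, h2⟩ := h
  simp only [lambdaForm, Fin.sum_univ_eight, kv0, kv1, kv2, kv3, kv4, kv5, kv6, kv7] at h1 h2
  constructor <;> linarith

set_option maxHeartbeats 2000000 in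
lemma x0_bounds {x : Fin 8 → ℤ} (h : IsExceptional x) : 0 ≤ x 0 ∧ x 0 ≤ 3 := by
  obtain ⟨hsq, hsum⟩ := exc_expand h
  have key : x 0 * x 0 ≤ 3 * x 0 + 3 := by
    nlinarith [sq_nonneg (x 1 - x 2), sq_nonneg (x 1 - x 3), sq_nonneg (x 1 - x 4),
      sq_nonneg (x 1 - x 5), sq_nonneg (x 1 - x 6), sq_nonneg (x 1 - x 7),
      sq_nonneg (x 2 - x 3), sq_nonneg (x 2 - x 4), sq_nonneg (x 2 - x 5),
      sq_nonneg (x 2 - x 6), sq_nonneg (x 2 - x 7), sq_nonneg (x 3 - x 4),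
      sq_nonneg (x 3 - x 5), sq_nonneg (x 3 - x 6), sq_nonneg (x 3 - x 7),
      sq_nonneg (x 4 - x 5), sq_nonneg (x 4 - x 6), sq_nonneg (x 4 - x 7),
      sq_nonneg (x 5 - x 6), sq_nonneg (x 5 - x 7), sq_nonneg (x 6 - x 7)]
  constructor <;> nlinarith [key, sq_nonneg (x 0 + 1), sq_nonneg (x 0 - 4)]

set_option maxHeartbeats 2000000 in
lemma mem_B0_of_exceptional {x : Fin 8 → ℤ} (h : IsExceptional x) (h0 : x 0 ≤ 1) :
    x ∈ B0 := by
  obtain ⟨hsq, hsum⟩ := exc_expand h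
  have h0' : 0 ≤ x 0 := (x0_bounds h).1
  have hb : x 0 * x 0 + 1 ≤ 2 := by nlinarith
  rw [B0, Fintype.mem_piFinset]
  intro i
  have abs1 : ∀ a : ℤ, a * a ≤ 2 → -1 ≤ a ∧ a ≤ 1 := by
    intro a ha
    constructor <;> nlinarith
  have b1 : x 1 * x 1 ≤ 2 := by linarith [mul_self_nonneg (x 2), mul_self_nonneg (x 3), mul_self_nonneg (x 4), mul_self_nonneg (x 5), mul_self_nonneg (x 6), mul_self_nonneg (x 7)]
  have b2 : x 2 * x 2 ≤ 2 := by linarith [mul_self_nonneg (x 1), mul_self_nonneg (x 3), mul_self_nonneg (x 4), mul_self_nonneg (x 5), mul_self_nonneg (x 6), mul_self_nonneg (x 7)]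
  have b3 : x 3 * x 3 ≤ 2 := by linarith [mul_self_nonneg (x 1), mul_self_nonneg (x 2), mul_self_nonneg (x 4), mul_self_nonneg (x 5), mul_self_nonneg (x 6), mul_self_nonneg (x 7)]
  have b4 : x 4 * x 4 ≤ 2 := by linarith [mul_self_nonneg (x 1), mul_self_nonneg (x 2), mul_self_nonneg (x 3), mul_self_nonneg (x 5), mul_self_nonneg (x 6), mul_self_nonneg (x 7)]
  have b5 : x 5 * x 5 ≤ 2 := by linarith [mul_self_nonneg (x 1), mul_self_nonneg (x 2), mul_self_nonneg (x 3), mul_self_nonneg (x 4), mul_self_nonneg (x 6), mul_self_nonneg (x 7)]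
  have b6 : x 6 * x 6 ≤ 2 := by linarith [mul_self_nonneg (x 1), mul_self_nonneg (x 2), mul_self_nonneg (x 3), mul_self_nonneg (x 4), mul_self_nonneg (x 5), mul_self_nonneg (x 7)]
  have b7 : x 7 * x 7 ≤ 2 := by linarith [mul_self_nonneg (x 1), mul_self_nonneg (x 2), mul_self_nonneg (x 3), mul_self_nonneg (x 4), mul_self_nonneg (x 5), mul_self_nonneg (x 6)]
  fin_cases i
  · exact Finset.mem_Icc.mpr ⟨h0', h0⟩
  · exact Finset.mem_Icc.mpr (abs1 _ b1)
  · exact Finset.mem_Icc.mpr (abs1 _ b2)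
  · exact Finset.mem_Icc.mpr (abs1 _ b3)
  · exact Finset.mem_Icc.mpr (abs1 _ b4)
  · exact Finset.mem_Icc.mpr (abs1 _ b5)
  · exact Finset.mem_Icc.mpr (abs1 _ b6)
  · exact Finset.mem_Icc.mpr (abs1 _ b7)

set_option maxRecDepth 100000 in
set_option maxHeartbeats 8000000 in
theorem card56 : Efin.card = 56 := by decide
set_option maxRecDepth 100000 in
set_option maxHeartbeats 8000000 in
theorem card28 : Pfin.card = 28 := by decide

lemma mem_Efin_of_exceptional {x : Fin 8 → ℤ} (h : IsExceptional x) : x ∈ Efin := by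
  by_cases h0 : x 0 ≤ 1
  · exact Finset.mem_union_left _ (Finset.mem_filter.2 ⟨mem_B0_of_exceptional h h0, h⟩)
  · have hy : IsExceptional (geiser x) := exceptional_geiser h
    have hy0 : (geiser x) 0 ≤ 1 := by
      have h3 := (x0_bounds h).2
      rw [geiser_eq h.2]
      simp only [Pi.sub_apply, Pi.neg_apply, kv0]
      omega
    have hmem : geiser x ∈ E0 := Finset.mem_filter.2 ⟨mem_B0_of_exceptional hy hy0, hy⟩
    exact Finset.mem_union_right _ (Finset.mem_image.2 ⟨geiser x, hmem, geiser_geiser h⟩)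

lemma exceptional_of_mem_Efin {x : Fin 8 → ℤ} (h : x ∈ Efin) : IsExceptional x := by
  rcases Finset.mem_union.1 h with h | h
  · exact (Finset.mem_filter.1 h).2
  · obtain ⟨e, he, rfl⟩ := Finset.mem_image.1 h
    exact exceptional_geiser (Finset.mem_filter.1 he).2

lemma set_eq : {e : Fin 8 → ℤ | IsExceptional e} = ↑Efin := by
  ext x
  exact ⟨fun h => mem_Efin_of_exceptional h, fun h => exceptional_of_mem_Efin h⟩

lemma pairs_eq : {s : Set (Fin 8 → ℤ) | ∃ e, IsExceptional e ∧ s = {e, geiser e}}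
    = (fun t : Finset (Fin 8 → ℤ) => (↑t : Set (Fin 8 → ℤ))) '' ↑Pfin := by
  ext s
  constructor
  · rintro ⟨e, he, rfl⟩
    refine ⟨{e, geiser e}, Finset.mem_coe.2 (Finset.mem_image.2 ⟨e, mem_Efin_of_exceptional he, rfl⟩), ?_⟩
    simp
  · rintro ⟨t, ht, rfl⟩
    obtain ⟨e, he, rfl⟩ := Finset.mem_image.1 (Finset.mem_coe.1 ht)
    exact ⟨e, exceptional_of_mem_Efin he, by simp⟩

theorem geiser_pairs_exceptional :
    (∀ e : Fin 8 → ℤ, IsExceptional e → IsExceptional (geiser e)) ∧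
    (∀ e : Fin 8 → ℤ, IsExceptional e → geiser e ≠ e) ∧
    {e : Fin 8 → ℤ | IsExceptional e}.ncard = 56 ∧
    {s : Set (Fin 8 → ℤ) | ∃ e, IsExceptional e ∧ s = {e, geiser e}}.ncard = 28 := by
  refine ⟨fun e he => exceptional_geiser he, fun e he hfix => ?_, ?_, ?_⟩
  · have hc := congrFun hfix 0
    rw [geiser_eq he.2] at hc
    simp only [Pi.sub_apply, Pi.neg_apply, kv0] at hc
    omega
  · rw [set_eq, Set.ncard_coe_finset, card56]
  · rw [pairs_eq, Set.ncard_image_of_injective _ Finset.coe_injective,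
      Set.ncard_coe_finset, card28]
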